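/- In the d-type Ehrenfest urn: if p_{jl} = p_l(1 + ∑_{i=1}^{d-1} ρ_i u_j^{(i)} u_l^{(i)}) and the generator L acts by Lf(x) = ∑_{j,l} (x_j/N) p_{jl} (f(x - e_j + e_l) - f(x)), then the multivariate Krawtchouk polynomial Q_n(·;u) is an eigenfunction: L Q_n(x;u) = -(∑_{i=1}^{d-1} n_i(1-ρ_i)/N) Q_n(x;u) for all x with |x| = N. -/

import Mathlib

open MvPolynomial

/-- Multivariate Krawtchouk polynomial `Q_n(x;u)`. -/
noncomputable def QK (d : ℕ) [NeZero d] (u : Fin d → Fin d → ℝ) (n x : Fin d → ℕ) : ℝ :=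
  MvPolynomial.coeff (Finsupp.equivFunOnFinite.symm n)
    (∏ j, (1 + ∑ l ∈ Finset.univ.erase 0, MvPolynomial.X l * MvPolynomial.C (u l j)) ^ x j)

theorem my_deriv_finset_prod {R A : Type*} [CommRing R] [CommRing A] [Algebra R A]
    (D : Derivation R A A) {ι : Type*} [DecidableEq ι] (s : Finset ι) (f : ι → A) :
    D (∏ j ∈ s, f j) = ∑ j ∈ s, D (f j) * ∏ m ∈ s.erase j, f m := by
  induction s using Finset.induction_on with
  | empty => simp
  | @insert a s' hj ih =>
    rw [Finset.prod_insert hj, Derivation.leibniz, ih, smul_eq_mul, smul_eq_mul,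
      Finset.sum_insert hj, Finset.erase_insert hj]
    have hstep : ∀ b ∈ s', D (f b) * ∏ m ∈ (insert a s').erase b, f m
        = f a * (D (f b) * ∏ m ∈ s'.erase b, f m) := by
      intro b hb
      rw [Finset.erase_insert_of_ne (ne_of_mem_of_not_mem hb hj).symm,
        Finset.prod_insert (fun h => hj (Finset.mem_of_mem_erase h))]
      ring
    rw [Finset.sum_congr rfl hstep, ← Finset.mul_sum]
    ring

theorem coeff_X_mul_pderiv {σ : Type*} [DecidableEq σ] (i : σ) (m : σ →₀ ℕ)
    (f : MvPolynomial σ ℝ) :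
    coeff m (X i * pderiv i f) = (m i : ℝ) * coeff m f := by
  induction f using MvPolynomial.induction_on' with
  | monomial v c =>
    rw [pderiv_monomial, X, monomial_mul, one_mul, coeff_monomial, coeff_monomial]
    by_cases hv : v i = 0
    · split_ifs with h1 h2 h2
      · subst h2; simp [hv]
      · simp [hv]
      · subst h2; simp [hv]
      · ring
    · have hvm : Finsupp.single i 1 + (v - Finsupp.single i 1) = v := by
        ext j
        by_cases hj : j = i
        · subst hj
          simp [Nat.add_sub_cancel' (Nat.one_le_iff_ne_zero.mpr hv)]
        · simp [Finsupp.single_apply, Ne.symm hj, hj]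
      rw [hvm]
      by_cases h : v = m
      · subst h; simp [mul_comm]
      · simp [h]
  | add p q hp hq =>
    rw [map_add, mul_add, coeff_add, coeff_add, hp, hq, mul_add]

noncomputable def Fp (d : ℕ) [NeZero d] (u : Fin d → Fin d → ℝ) (j : Fin d) :
    MvPolynomial (Fin d) ℝ :=
  1 + ∑ l ∈ Finset.univ.erase 0, MvPolynomial.X l * MvPolynomial.C (u l j)

noncomputable def Gp (d : ℕ) [NeZero d] (u : Fin d → Fin d → ℝ) (x : Fin d → ℕ) :
    MvPolynomial (Fin d) ℝ :=
  ∏ j, Fp d u j ^ x j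

noncomputable def Hp (d : ℕ) [NeZero d] (u : Fin d → Fin d → ℝ) (x : Fin d → ℕ) (j : Fin d) :
    MvPolynomial (Fin d) ℝ :=
  Fp d u j ^ (x j - 1) * ∏ m ∈ Finset.univ.erase j, Fp d u m ^ x m

theorem pderiv_Fp (d : ℕ) [NeZero d] (u : Fin d → Fin d → ℝ) (i j : Fin d)
    (hi : i ∈ Finset.univ.erase (0 : Fin d)) :
    pderiv i (Fp d u j) = C (u i j) := by
  unfold Fp
  rw [map_add, map_sum]
  have h1 : (pderiv i (1 : MvPolynomial (Fin d) ℝ)) = 0 := pderiv_one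
  rw [h1, zero_add, Finset.sum_eq_single i]
  · rw [pderiv_mul, pderiv_X_self, pderiv_C, one_mul, mul_zero, add_zero]
  · intro b _ hb
    rw [pderiv_mul, pderiv_X_of_ne hb, pderiv_C, zero_mul, mul_zero, add_zero]
  · intro h; exact absurd hi h

theorem Fp_mul_Hp (d : ℕ) [NeZero d] (u : Fin d → Fin d → ℝ) (x : Fin d → ℕ) (j : Fin d)
    (hxj : 1 ≤ x j) : Fp d u j * Hp d u x j = Gp d u x := by
  unfold Gp Hp
  rw [← mul_assoc, ← pow_succ', Nat.sub_add_cancel hxj]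
  exact Finset.mul_prod_erase Finset.univ (fun m => Fp d u m ^ x m) (Finset.mem_univ j)

theorem Gp_move (d : ℕ) [NeZero d] (u : Fin d → Fin d → ℝ) (x : Fin d → ℕ) (j l : Fin d)
    (hxj : 1 ≤ x j) :
    (∏ m, Fp d u m ^ (x m - (if m = j then 1 else 0) + if m = l then 1 else 0))
      = Fp d u l * Hp d u x j := by
  by_cases hlj : l = j
  · subst hlj
    have hy : ∀ m, x m - (if m = l then 1 else 0) + (if m = l then 1 else 0) = x m := by
      intro m
      by_cases h : m = l
      · subst h; simp [Nat.sub_add_cancel hxj]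
      · simp [h]
    simp only [hy]
    exact (Fp_mul_Hp d u x l hxj).symm
  · have hl' : l ∈ Finset.univ.erase j := Finset.mem_erase.mpr ⟨hlj, Finset.mem_univ l⟩
    rw [← Finset.mul_prod_erase Finset.univ _ (Finset.mem_univ j),
      ← Finset.mul_prod_erase _ _ hl']
    have hyj : x j - (if j = j then 1 else 0) + (if j = l then 1 else 0) = x j - 1 := by
      simp [Ne.symm hlj]
    have hyl : x l - (if l = j then 1 else 0) + (if l = l then 1 else 0) = x l + 1 := by
      simp [hlj]
    have hym : ∀ m ∈ (Finset.univ.erase j).erase l,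
        Fp d u m ^ (x m - (if m = j then 1 else 0) + if m = l then 1 else 0)
          = Fp d u m ^ x m := by
      intro m hm
      have h1 : m ≠ l := (Finset.mem_erase.mp hm).1
      have h2 : m ≠ j := (Finset.mem_erase.mp (Finset.mem_of_mem_erase hm)).1
      simp [h1, h2]
    rw [hyj, hyl, Finset.prod_congr rfl hym]
    unfold Hp
    rw [← Finset.mul_prod_erase _ (fun m => Fp d u m ^ x m) hl', pow_succ]
    ring

theorem coeff_sum_Hp (d : ℕ) [NeZero d] (u : Fin d → Fin d → ℝ) (x : Fin d → ℕ)
    (i : Fin d) (hi : i ∈ Finset.univ.erase (0 : Fin d)) (nn : Fin d →₀ ℕ) :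
    ∑ j, (x j : ℝ) * u i j * coeff nn (X i * Hp d u x j)
      = (nn i : ℝ) * coeff nn (Gp d u x) := by
  rw [← coeff_X_mul_pderiv]
  unfold Gp
  rw [my_deriv_finset_prod (pderiv i) Finset.univ (fun j => Fp d u j ^ x j)]
  rw [Finset.mul_sum, coeff_sum]
  apply Finset.sum_congr rfl
  intro j _
  rw [pderiv_pow, pderiv_Fp d u i j hi]
  have h : (X i : MvPolynomial (Fin d) ℝ) *
      ((x j : MvPolynomial (Fin d) ℝ) * Fp d u j ^ (x j - 1) * C (u i j) *
        ∏ m ∈ Finset.univ.erase j, Fp d u m ^ x m)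
      = C ((x j : ℝ) * u i j) * (X i * Hp d u x j) := by
    unfold Hp
    rw [map_mul, C_eq_coe_nat]
    ring
  rw [h, coeff_C_mul]

/-- In the `d`-type Ehrenfest urn with `p_{jl} = p_l(1 + ∑_i ρ_i u_j^{(i)} u_l^{(i)})`,
the multivariate Krawtchouk polynomial `Q_n(·;u)` is an eigenfunction of the
generator with eigenvalue `-∑_i n_i(1-ρ_i)/N`. -/
theorem ehrenfest_urn_eigenfunction
    (d N : ℕ) [NeZero d] (hd : 2 ≤ d) (hN : 0 < N)
    (p : Fin d → ℝ) (hp : ∀ j, 0 < p j) (hpsum : ∑ j, p j = 1)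
    (u : Fin d → Fin d → ℝ) (hu0 : ∀ j, u 0 j = 1)
    (horth : ∀ l m, ∑ i, u l i * u m i * p i = if l = m then (1 : ℝ) else 0)
    (ρ : Fin d → ℝ)
    (hPnonneg : ∀ j l, 0 ≤ p l * (1 + ∑ i ∈ Finset.univ.erase 0, ρ i * u i j * u i l))
    (x : Fin d → ℕ) (hx : ∑ j, x j = N)
    (n : Fin d → ℕ) (hn0 : n 0 = 0) (hn : ∑ i, n i ≤ N) :
    ∑ j, ∑ l,
        ((x j : ℝ) / N) *
          (p l * (1 + ∑ i ∈ Finset.univ.erase 0, ρ i * u i j * u i l)) *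
          (QK d u n
              (fun m => x m - (if m = j then 1 else 0) + if m = l then 1 else 0) -
            QK d u n x) =
      -(∑ i ∈ Finset.univ.erase 0, (n i : ℝ) * (1 - ρ i) / N) * QK d u n x := by
  classical
  have hQK : ∀ y : Fin d → ℕ,
      QK d u n y = coeff (Finsupp.equivFunOnFinite.symm n) (Gp d u y) := fun y => rfl
  set nn : Fin d →₀ ℕ := Finsupp.equivFunOnFinite.symm n with hnn_def
  have hnn : ∀ i, nn i = n i := fun i => rfl
  -- expansion helper
  have hexp : ∀ (a b : ℝ) (g : Fin d → ℝ),
      a * (1 + ∑ i ∈ Finset.univ.erase 0, g i) * b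
        = a * b + ∑ i ∈ Finset.univ.erase 0, a * b * g i := by
    intro a b g
    rw [mul_add, mul_one, add_mul, Finset.mul_sum, Finset.sum_mul]
    congr 1
    exact Finset.sum_congr rfl fun i _ => by ring
  -- orthogonality consequences
  have horth0 : ∀ i : Fin d, i ≠ 0 → ∑ t, u i t * p t = 0 := by
    intro i hi
    have h := horth i 0
    simp only [hu0, mul_one, if_neg hi] at h
    exact h
  -- row sums of the transition kernel
  have hP1 : ∀ j, ∑ l, p l * (1 + ∑ i ∈ Finset.univ.erase 0, ρ i * u i j * u i l) = 1 := by
    intro j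
    have h1 : ∀ l, p l * (1 + ∑ i ∈ Finset.univ.erase 0, ρ i * u i j * u i l)
        = p l + ∑ i ∈ Finset.univ.erase 0, ρ i * u i j * (u i l * p l) := by
      intro l
      rw [← mul_one (p l * (1 + ∑ i ∈ Finset.univ.erase 0, ρ i * u i j * u i l)), hexp]
      rw [mul_one]
      congr 1
      exact Finset.sum_congr rfl fun i _ => by ring
    rw [Finset.sum_congr rfl fun l _ => h1 l, Finset.sum_add_distrib, hpsum, Finset.sum_comm]
    have hz : ∀ i ∈ Finset.univ.erase (0 : Fin d),
        ∑ l, ρ i * u i j * (u i l * p l) = 0 := by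
      intro i hi
      rw [← Finset.mul_sum, horth0 i (Finset.mem_erase.mp hi).1, mul_zero]
    rw [Finset.sum_congr rfl hz, Finset.sum_const, smul_zero, add_zero]
  have hPu : ∀ j, ∀ i' ∈ Finset.univ.erase (0 : Fin d),
      ∑ l, p l * (1 + ∑ i ∈ Finset.univ.erase 0, ρ i * u i j * u i l) * u i' l
        = ρ i' * u i' j := by
    intro j i' hi'
    have hi'0 : i' ≠ 0 := (Finset.mem_erase.mp hi').1
    have h1 : ∀ l, p l * (1 + ∑ i ∈ Finset.univ.erase 0, ρ i * u i j * u i l) * u i' l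
        = u i' l * p l + ∑ i ∈ Finset.univ.erase 0,
            ρ i * u i j * (u i l * u i' l * p l) := by
      intro l
      rw [hexp]
      congr 1
      · ring
      exact Finset.sum_congr rfl fun i _ => by ring
    rw [Finset.sum_congr rfl fun l _ => h1 l, Finset.sum_add_distrib, horth0 i' hi'0,
      zero_add, Finset.sum_comm]
    have hz : ∀ i ∈ Finset.univ.erase (0 : Fin d),
        ∑ l, ρ i * u i j * (u i l * u i' l * p l)
          = if i = i' then ρ i * u i j else 0 := by
      intro i _
      rw [← Finset.mul_sum, horth i i']
      split_ifs with h
      · rw [mul_one]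
      · rw [mul_zero]
    rw [Finset.sum_congr rfl hz, Finset.sum_ite_eq' (Finset.univ.erase (0 : Fin d)) i'
      (fun i => ρ i * u i j), if_pos hi']
  -- polynomial row-sum identity
  have hFsum : ∀ j, ∑ l, C (p l * (1 + ∑ i ∈ Finset.univ.erase 0, ρ i * u i j * u i l))
        * Fp d u l
      = Fp d u j + ∑ i ∈ Finset.univ.erase 0, X i * C ((ρ i - 1) * u i j) := by
    intro j
    have h1 : ∀ l, C (p l * (1 + ∑ i ∈ Finset.univ.erase 0, ρ i * u i j * u i l)) * Fp d u l
        = C (p l * (1 + ∑ i ∈ Finset.univ.erase 0, ρ i * u i j * u i l))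
          + ∑ i ∈ Finset.univ.erase 0,
              X i * C (p l * (1 + ∑ i' ∈ Finset.univ.erase 0, ρ i' * u i' j * u i' l)
                * u i l) := by
      intro l
      unfold Fp
      rw [mul_add, mul_one, Finset.mul_sum]
      congr 1
      refine Finset.sum_congr rfl fun i _ => ?_
      conv_rhs => rw [map_mul]
      ring
    rw [Finset.sum_congr rfl fun l _ => h1 l, Finset.sum_add_distrib, ← map_sum, hP1 j,
      Finset.sum_comm]
    have h2 : ∀ i ∈ Finset.univ.erase (0 : Fin d),
        ∑ l, X i * C (p l * (1 + ∑ i' ∈ Finset.univ.erase 0, ρ i' * u i' j * u i' l) * u i l)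
          = X i * C (ρ i * u i j) := by
      intro i hi
      rw [← Finset.mul_sum, ← map_sum, hPu j i hi]
    rw [Finset.sum_congr rfl h2]
    unfold Fp
    rw [map_one, add_assoc, ← Finset.sum_add_distrib]
    congr 1
    refine Finset.sum_congr rfl fun i _ => ?_
    rw [← mul_add, ← map_add]
    congr 2
    ring
  -- per-row computation
  have hrow : ∀ j, ∑ l, ((x j : ℝ) / N) *
        (p l * (1 + ∑ i ∈ Finset.univ.erase 0, ρ i * u i j * u i l)) *
        (QK d u n (fun m => x m - (if m = j then 1 else 0) + if m = l then 1 else 0) -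
          QK d u n x)
      = ((x j : ℝ) / N) *
          ∑ i ∈ Finset.univ.erase 0, (ρ i - 1) * u i j * coeff nn (X i * Hp d u x j) := by
    intro j
    by_cases hxj : x j = 0
    · simp [hxj]
    · have hx1 : 1 ≤ x j := Nat.one_le_iff_ne_zero.mpr hxj
      have hQm : ∀ l, QK d u n
            (fun m => x m - (if m = j then 1 else 0) + if m = l then 1 else 0)
          = coeff nn (Fp d u l * Hp d u x j) := by
        intro l
        rw [hQK, ← Gp_move d u x j l hx1]
        rfl
      have key : ∑ l, (p l * (1 + ∑ i ∈ Finset.univ.erase 0, ρ i * u i j * u i l))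
            * coeff nn (Fp d u l * Hp d u x j)
          = coeff nn (Gp d u x)
            + ∑ i ∈ Finset.univ.erase 0,
                (ρ i - 1) * u i j * coeff nn (X i * Hp d u x j) := by
        have hstep : ∑ l, (p l * (1 + ∑ i ∈ Finset.univ.erase 0, ρ i * u i j * u i l))
              * coeff nn (Fp d u l * Hp d u x j)
            = coeff nn ((∑ l, C (p l * (1 + ∑ i ∈ Finset.univ.erase 0, ρ i * u i j * u i l))
                * Fp d u l) * Hp d u x j) := by
          rw [Finset.sum_mul, coeff_sum]
          refine Finset.sum_congr rfl fun l _ => ?_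
          rw [show C (p l * (1 + ∑ i ∈ Finset.univ.erase 0, ρ i * u i j * u i l))
                * Fp d u l * Hp d u x j
              = C (p l * (1 + ∑ i ∈ Finset.univ.erase 0, ρ i * u i j * u i l))
                * (Fp d u l * Hp d u x j) from mul_assoc _ _ _, coeff_C_mul]
        rw [hstep, hFsum j, add_mul, coeff_add, Fp_mul_Hp d u x j hx1,
          Finset.sum_mul, coeff_sum]
        congr 1
        refine Finset.sum_congr rfl fun i _ => ?_
        rw [show X i * C ((ρ i - 1) * u i j) * Hp d u x j
            = C ((ρ i - 1) * u i j) * (X i * Hp d u x j) by ring, coeff_C_mul]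
      calc ∑ l, ((x j : ℝ) / N) *
            (p l * (1 + ∑ i ∈ Finset.univ.erase 0, ρ i * u i j * u i l)) *
            (QK d u n (fun m => x m - (if m = j then 1 else 0) + if m = l then 1 else 0) -
              QK d u n x)
          = ((x j : ℝ) / N) *
              ∑ l, ((p l * (1 + ∑ i ∈ Finset.univ.erase 0, ρ i * u i j * u i l))
                  * coeff nn (Fp d u l * Hp d u x j)
                - (p l * (1 + ∑ i ∈ Finset.univ.erase 0, ρ i * u i j * u i l))
                  * coeff nn (Gp d u x)) := by
            rw [Finset.mul_sum]
            refine Finset.sum_congr rfl fun l _ => ?_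
            rw [hQm l, hQK]
            ring
        _ = ((x j : ℝ) / N) *
              ((∑ l, (p l * (1 + ∑ i ∈ Finset.univ.erase 0, ρ i * u i j * u i l))
                  * coeff nn (Fp d u l * Hp d u x j))
                - (∑ l, p l * (1 + ∑ i ∈ Finset.univ.erase 0, ρ i * u i j * u i l))
                  * coeff nn (Gp d u x)) := by
            rw [Finset.sum_sub_distrib, Finset.sum_mul]
        _ = ((x j : ℝ) / N) *
              ∑ i ∈ Finset.univ.erase 0,
                (ρ i - 1) * u i j * coeff nn (X i * Hp d u x j) := by
            rw [key, hP1 j, one_mul]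
            ring
  rw [Finset.sum_congr rfl fun j _ => hrow j]
  -- swap sums
  have hswap : ∑ j, ((x j : ℝ) / N) *
        ∑ i ∈ Finset.univ.erase 0, (ρ i - 1) * u i j * coeff nn (X i * Hp d u x j)
      = ∑ i ∈ Finset.univ.erase 0, ((ρ i - 1) / N) *
          ∑ j, (x j : ℝ) * u i j * coeff nn (X i * Hp d u x j) := by
    have h1 : ∀ j, ((x j : ℝ) / N) *
          ∑ i ∈ Finset.univ.erase 0, (ρ i - 1) * u i j * coeff nn (X i * Hp d u x j)
        = ∑ i ∈ Finset.univ.erase 0,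
            ((ρ i - 1) / N) * ((x j : ℝ) * u i j * coeff nn (X i * Hp d u x j)) := by
      intro j
      rw [Finset.mul_sum]
      exact Finset.sum_congr rfl fun i _ => by ring
    rw [Finset.sum_congr rfl fun j _ => h1 j, Finset.sum_comm]
    exact Finset.sum_congr rfl fun i _ => by rw [Finset.mul_sum]
  rw [hswap]
  have hE : ∀ i ∈ Finset.univ.erase (0 : Fin d),
      ((ρ i - 1) / N) * ∑ j, (x j : ℝ) * u i j * coeff nn (X i * Hp d u x j)
        = ((ρ i - 1) / N) * ((n i : ℝ) * coeff nn (Gp d u x)) := by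
    intro i hi
    rw [coeff_sum_Hp d u x i hi nn, hnn]
  rw [Finset.sum_congr rfl hE, hQK, neg_mul, Finset.sum_mul, ← Finset.sum_neg_distrib]
  exact Finset.sum_congr rfl fun i _ => by ring
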